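/- For n ≥ 4 and 1 ≤ i ≤ ⌊(n-1)/2⌋, in the symmetric inverse monoid on {1,...,n} one has (x_i ∘ g^i)² = e_2 ⋯ e_i ∘ e_{i+2} ⋯ e_n, the partial identity with domain {1, i+1}. -/

import Mathlib

/-- Powers in the symmetric inverse monoid (left-to-right composition). -/
def dPow (f : PartialEquiv ℕ ℕ) : ℕ → PartialEquiv ℕ ℕ
  | 0 => PartialEquiv.refl ℕ
  | k + 1 => (dPow f k).trans f

/-- The partial identity `e_j` on `{1,…,n} \ {j}`. -/
def dE (n j : ℕ) : PartialEquiv ℕ ℕ := PartialEquiv.ofSet (Set.Icc 1 n \ {j})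

/-- The `n`-cycle `g : i ↦ i+1 (mod n)` on `{1,…,n}`. -/
def dCyc (n : ℕ) : PartialEquiv ℕ ℕ where
  toFun k := if k = n then 1 else k + 1
  invFun k := if k = 1 then n else k - 1
  source := Set.Icc 1 n
  target := Set.Icc 1 n
  map_source' := by
    intro k hk
    simp only [Set.mem_Icc] at *
    split_ifs <;> omega
  map_target' := by
    intro k hk
    simp only [Set.mem_Icc] at *
    split_ifs <;> omega
  left_inv' := by
    intro k hk
    simp only [Set.mem_Icc] at hk
    (try dsimp only)
    split_ifs <;> omega
  right_inv' := by
    intro k hk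
    simp only [Set.mem_Icc] at hk
    (try dsimp only)
    split_ifs <;> omega

/-- The reversal `h : k ↦ n+1-k` on `{1,…,n}`. -/
def dRev (n : ℕ) : PartialEquiv ℕ ℕ where
  toFun k := n + 1 - k
  invFun k := n + 1 - k
  source := Set.Icc 1 n
  target := Set.Icc 1 n
  map_source' := by
    intro k hk; simp only [Set.mem_Icc] at *; omega
  map_target' := by
    intro k hk; simp only [Set.mem_Icc] at *; omega
  left_inv' := by
    intro k hk; simp only [Set.mem_Icc] at hk; (try dsimp only); omega
  right_inv' := by
    intro k hk; simp only [Set.mem_Icc] at hk; (try dsimp only); omega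

/-- The partial shift `x : j ↦ j+1` with domain `{1,…,n-1}`. -/
def dShift (n : ℕ) : PartialEquiv ℕ ℕ where
  toFun k := k + 1
  invFun k := k - 1
  source := Set.Icc 1 (n - 1)
  target := Set.Icc 2 n
  map_source' := by
    intro k hk; simp only [Set.mem_Icc] at *; omega
  map_target' := by
    intro k hk; simp only [Set.mem_Icc] at *; omega
  left_inv' := by
    intro k hk; simp only [Set.mem_Icc] at hk; (try dsimp only); omega
  right_inv' := by
    intro k hk; simp only [Set.mem_Icc] at hk; (try dsimp only); omega

/-- The rank-2 partial bijection `x_i` with domain `{1, 1+i}`, sending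
`1 ↦ 1` and `1+i ↦ n-i+1`. -/
def dXi (n i : ℕ) (h1 : 1 ≤ i) (h2 : i < n) : PartialEquiv ℕ ℕ where
  toFun k := if k = 1 then 1 else n - i + 1
  invFun k := if k = 1 then 1 else 1 + i
  source := {1, 1 + i}
  target := {1, n - i + 1}
  map_source' := by
    intro k _
    (try dsimp only)
    split_ifs <;> simp
  map_target' := by
    intro k _
    (try dsimp only)
    split_ifs <;> simp
  left_inv' := by
    intro k hk
    simp only [Set.mem_insert_iff, Set.mem_singleton_iff] at hk
    rcases hk with rfl | rfl <;> ((try dsimp only); split_ifs <;> omega)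
  right_inv' := by
    intro k hk
    simp only [Set.mem_insert_iff, Set.mem_singleton_iff] at hk
    rcases hk with rfl | rfl <;> ((try dsimp only); split_ifs <;> omega)


lemma dPow_apply (n : ℕ) : ∀ k, k ≤ n → ∀ x, 1 ≤ x → x ≤ n →
    (dPow (dCyc n) k) x = if x + k ≤ n then x + k else x + k - n := by
  intro k
  induction k with
  | zero =>
    intro _ x h1 h2
    simp only [dPow, PartialEquiv.refl_coe, id_eq, if_pos (by omega : x + 0 ≤ n)]; omega
  | succ k ih =>
    intro hk x h1 h2
    have hv := ih (by omega) x h1 h2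
    show (dCyc n) ((dPow (dCyc n) k) x) = _
    rw [hv]
    show (if (if x + k ≤ n then x + k else x + k - n) = n then 1
      else (if x + k ≤ n then x + k else x + k - n) + 1) = _
    split_ifs <;> omega

lemma dPow_source (n : ℕ) : ∀ k, 1 ≤ k → k ≤ n →
    (dPow (dCyc n) k).source = Set.Icc 1 n := by
  intro k
  induction k with
  | zero => omega
  | succ k ih =>
    intro _ hk
    show ((dPow (dCyc n) k).trans (dCyc n)).source = _
    rw [PartialEquiv.trans_source]
    rcases Nat.eq_zero_or_pos k with rfl | hk1
    · simp [dPow, dCyc]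
    · rw [ih hk1 (by omega)]
      ext x
      simp only [Set.mem_inter_iff, Set.mem_preimage, Set.mem_Icc]
      constructor
      · exact fun h => h.1
      · intro hx
        refine ⟨hx, ?_⟩
        rw [dPow_apply n k (by omega) x hx.1 hx.2]
        show (if x + k ≤ n then x + k else x + k - n) ∈ Set.Icc 1 n
        simp only [Set.mem_Icc]; split_ifs <;> omega

/-- For `n ≥ 4` and `1 ≤ i ≤ ⌊(n-1)/2⌋`:
`(x_i g^i)² = e_2 ⋯ e_i e_{i+2} ⋯ e_n`, the partial identity with domain
`{1, i+1}` (left-to-right composition). -/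
theorem stmt7 (n i : ℕ) (hn : 4 ≤ n) (h1 : 1 ≤ i) (h2 : i ≤ (n - 1) / 2) :
    ((dXi n i h1 (by omega)).trans (dPow (dCyc n) i)).trans
        ((dXi n i h1 (by omega)).trans (dPow (dCyc n) i))
      ≈ PartialEquiv.ofSet ({1, i + 1} : Set ℕ) := by
  set e := (dXi n i h1 (by omega : i < n)).trans (dPow (dCyc n) i) with he
  have hin : i ≤ n := by omega
  have hxi1 : (dXi n i h1 (by omega : i < n)) 1 = 1 := by
    show (if 1 = 1 then 1 else n - i + 1) = 1
    simp
  have hxi2 : (dXi n i h1 (by omega : i < n)) (1 + i) = n - i + 1 := by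
    show (if 1 + i = 1 then 1 else n - i + 1) = n - i + 1
    rw [if_neg (by omega)]
  have he1 : e 1 = 1 + i := by
    show (dPow (dCyc n) i) ((dXi n i h1 (by omega : i < n)) 1) = 1 + i
    rw [hxi1, dPow_apply n i hin 1 (by omega) (by omega), if_pos (by omega)]
  have he2 : e (1 + i) = 1 := by
    show (dPow (dCyc n) i) ((dXi n i h1 (by omega : i < n)) (1 + i)) = 1
    rw [hxi2, dPow_apply n i hin (n - i + 1) (by omega) (by omega),
      if_neg (by omega)]
    omega
  have hes : e.source = {1, 1 + i} := by
    rw [he, PartialEquiv.trans_source, dPow_source n i h1 hin]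
    have : (dXi n i h1 (by omega : i < n)).source = {1, 1 + i} := rfl
    rw [this]
    ext x
    simp only [Set.mem_inter_iff, Set.mem_preimage, Set.mem_insert_iff,
      Set.mem_singleton_iff, Set.mem_Icc]
    constructor
    · exact fun h => h.1
    · rintro (rfl | rfl)
      · rw [hxi1]; exact ⟨Or.inl rfl, by omega⟩
      · rw [hxi2]; exact ⟨Or.inr rfl, by constructor <;> omega⟩
  constructor
  · rw [PartialEquiv.trans_source, hes]
    ext x
    simp only [Set.mem_inter_iff, Set.mem_preimage, Set.mem_insert_iff,
      Set.mem_singleton_iff, PartialEquiv.ofSet_source]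
    constructor
    · rintro ⟨h, _⟩; omega
    · rintro (rfl | h)
      · rw [he1]; exact ⟨Or.inl rfl, Or.inr rfl⟩
      · have : x = 1 + i := by omega
        subst this
        rw [he2]; exact ⟨Or.inr rfl, Or.inl rfl⟩
  · intro x hx
    rw [PartialEquiv.trans_source, hes] at hx
    simp only [Set.mem_inter_iff, Set.mem_insert_iff, Set.mem_singleton_iff] at hx
    show e (e x) = (PartialEquiv.ofSet ({1, i + 1} : Set ℕ)) x
    rcases hx.1 with rfl | rfl
    · rw [he1, he2]; rfl
    · rw [he2, he1]
      show 1 + i = id (1 + i)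
      rfl
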